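/- Let G = (V,E) be an unweighted directed acyclic graph (no directed cycles, in particular no self-loops). Then G is a 2-sequence graph (i.e., admits a 2-realization) if and only if G is a directed path, that is, its vertices can be ordered v_1,…,v_n so that the arc set is exactly {(v_i, v_{i+1}) : 1 ≤ i < n}. Moreover, in that case G has exactly one 2-realization, namely the sequence v_1 v_2 … v_n. -/

import Mathlib

/-- The sequence digraph of `x` with window size `w` has an arc `(u,v)` exactly when
there are positions `k < k' < k + w` with `x_k = u` and `x_{k'} = v`. -/
def seqArc {V : Type*} (w : ℕ) (x : List V) (u v : V) : Prop :=
  ∃ k k' : ℕ, k < k' ∧ k' < k + w ∧ x[k]? = some u ∧ x[k']? = some v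

/-- `x` is a `w`-realization of the digraph on vertex set `V` (self-loops allowed)
with adjacency relation `Adj`. -/
def IsRealizationD {V : Type*} (w : ℕ) (Adj : V → V → Prop) (x : List V) : Prop :=
  x ≠ [] ∧ (∀ v : V, v ∈ x) ∧ ∀ u v : V, Adj u v ↔ seqArc w x u v

/-- `l` is an ordering `v_1, …, v_n` of all the vertices (without repetition) such that the
arcs of the digraph are exactly the pairs `(v_i, v_{i+1})`, i.e. the digraph is the directed
path `v_1 → v_2 → ⋯ → v_n`. -/
def IsDirPathList {V : Type*} (Adj : V → V → Prop) (l : List V) : Prop :=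
  l.Nodup ∧ (∀ v : V, v ∈ l) ∧
    ∀ u v : V, Adj u v ↔ ∃ k : ℕ, l[k]? = some u ∧ l[k + 1]? = some v

lemma seqArc2_iff {V : Type*} (x : List V) (u v : V) :
    seqArc 2 x u v ↔ ∃ k : ℕ, x[k]? = some u ∧ x[k + 1]? = some v := by
  constructor
  · rintro ⟨k, k', h1, h2, hu, hv⟩
    have : k' = k + 1 := by omega
    exact ⟨k, hu, this ▸ hv⟩
  · rintro ⟨k, hu, hv⟩
    exact ⟨k, k + 1, by omega, by omega, hu, hv⟩

lemma chain_trans {V : Type*} {Adj : V → V → Prop} {x : List V}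
    (h : ∀ u v, (∃ k : ℕ, x[k]? = some u ∧ x[k + 1]? = some v) → Adj u v) :
    ∀ n i, 0 < n → ∀ hi : i + n < x.length,
      Relation.TransGen Adj (x[i]'(by omega)) (x[i + n]'hi) := by
  intro n
  induction n with
  | zero => omega
  | succ m ih =>
    intro i _ hi
    have step : Adj (x[i + m]'(by omega)) (x[i + m + 1]'(by omega)) :=
      h _ _ ⟨i + m, List.getElem?_eq_getElem (by omega), List.getElem?_eq_getElem (by omega)⟩
    rcases Nat.eq_zero_or_pos m with hm | hm
    · subst hm
      simpa using Relation.TransGen.single step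
    · exact Relation.TransGen.tail (ih i hm (by omega)) step

lemma real_nodup {V : Type*} {Adj : V → V → Prop}
    (hdag : ∀ v : V, ¬ Relation.TransGen Adj v v) {x : List V}
    (hx : IsRealizationD 2 Adj x) : x.Nodup := by
  have harc : ∀ u v, (∃ k : ℕ, x[k]? = some u ∧ x[k + 1]? = some v) → Adj u v := fun u v hk =>
    (hx.2.2 u v).mpr ((seqArc2_iff x u v).mpr hk)
  have key : ∀ i j, ∀ _hij : i < j, ∀ hj : j < x.length, ¬ x[i]'(by omega) = x[j]'hj := by
    intro i j hlt hj heq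
    have hc : Relation.TransGen Adj (x[i]'(by omega)) (x[j]'hj) := by
      have hc := chain_trans harc (j - i) i (by omega) (by omega)
      convert hc using 2
      omega
    rw [heq] at hc
    exact hdag _ hc
  rw [List.nodup_iff_injective_get]
  rintro ⟨i, hi⟩ ⟨j, hj⟩ hij
  simp only [List.get_eq_getElem] at hij
  by_contra hne
  simp only [Fin.mk.injEq] at hne
  rcases Nat.lt_or_ge i j with hlt | hge
  · exact key i j hlt hj hij
  · exact key j i (by omega) hi hij.symm

lemma real_to_path {V : Type*} {Adj : V → V → Prop}
    (hdag : ∀ v : V, ¬ Relation.TransGen Adj v v) {x : List V}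
    (hx : IsRealizationD 2 Adj x) : IsDirPathList Adj x :=
  ⟨real_nodup hdag hx, hx.2.1, fun u v => (hx.2.2 u v).trans (seqArc2_iff x u v)⟩

lemma path_to_real {V : Type*} [Nonempty V] {Adj : V → V → Prop} {l : List V}
    (hl : IsDirPathList Adj l) : IsRealizationD 2 Adj l := by
  obtain ⟨hnd, hmem, hiff⟩ := hl
  refine ⟨?_, hmem, fun u v => (hiff u v).trans (seqArc2_iff l u v).symm⟩
  obtain ⟨v⟩ := ‹Nonempty V›
  exact List.ne_nil_of_mem (hmem v)

lemma path_len {V : Type*} [Fintype V] {Adj : V → V → Prop} {l : List V}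
    (hl : IsDirPathList Adj l) : l.length = Fintype.card V := by
  classical
  have h1 : l.toFinset = Finset.univ := by
    ext v; simp [hl.2.1 v]
  have h2 := List.toFinset_card_of_nodup hl.1
  rw [h1, Finset.card_univ] at h2
  exact h2.symm

lemma path_unique {V : Type*} [Fintype V] {Adj : V → V → Prop} {l x : List V}
    (hl : IsDirPathList Adj l) (hx : IsDirPathList Adj x) : x = l := by
  have hlen : x.length = l.length := by rw [path_len hl, path_len hx]
  apply List.ext_getElem?
  intro k
  induction k with
  | zero =>
    cases hl0 : l[0]? with
    | none =>
      rw [List.getElem?_eq_none_iff] at hl0 ⊢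
      omega
    | some a =>
      have ha : a ∈ x := hx.2.1 a
      obtain ⟨j, hjlt, hja⟩ := List.mem_iff_getElem.mp ha
      rcases j with _ | i
      · rw [List.getElem?_eq_getElem hjlt, hja]
      · exfalso
        have hadj : Adj (x[i]'(by omega)) a := by
          refine (hx.2.2 _ _).mpr ⟨i, List.getElem?_eq_getElem (by omega), ?_⟩
          rw [List.getElem?_eq_getElem hjlt, hja]
        obtain ⟨m, _, hm2⟩ := (hl.2.2 _ _).mp hadj
        have h0lt : 0 < l.length := by
          by_contra h
          rw [List.getElem?_eq_none_iff.mpr (by omega)] at hl0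
          exact Option.some_ne_none _ hl0.symm
        have := (List.getElem?_inj h0lt hl.1).mp (hl0.trans hm2.symm)
        omega
  | succ k ih =>
    cases hlk : l[k + 1]? with
    | none =>
      rw [List.getElem?_eq_none_iff] at hlk ⊢
      omega
    | some b =>
      have hklt : k + 1 < l.length := by
        by_contra h
        rw [List.getElem?_eq_none_iff.mpr (by omega)] at hlk
        exact Option.some_ne_none _ hlk.symm
      have hla : l[k]? = some (l[k]'(by omega)) := List.getElem?_eq_getElem (by omega)
      have hadj : Adj (l[k]'(by omega)) b := (hl.2.2 _ _).mpr ⟨k, hla, hlk⟩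
      obtain ⟨m, hm1, hm2⟩ := (hx.2.2 _ _).mp hadj
      have hmlt : m < x.length := by
        by_contra h
        rw [List.getElem?_eq_none_iff.mpr (by omega)] at hm1
        exact Option.some_ne_none _ hm1.symm
      have hxk : x[k]? = some (l[k]'(by omega)) := ih.trans hla
      have : m = k := (List.getElem?_inj hmlt hx.1).mp (hm1.trans hxk.symm)
      rw [← this, hm2]

theorem stmt2 {V : Type*} [Fintype V] [Nonempty V] (Adj : V → V → Prop)
    (hdag : ∀ v : V, ¬ Relation.TransGen Adj v v) :
    ((∃ x : List V, IsRealizationD 2 Adj x) ↔ ∃ l : List V, IsDirPathList Adj l) ∧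
    (∀ l : List V, IsDirPathList Adj l →
      ∀ x : List V, IsRealizationD 2 Adj x ↔ x = l) := by
  constructor
  · exact ⟨fun ⟨x, hx⟩ => ⟨x, real_to_path hdag hx⟩, fun ⟨l, hl⟩ => ⟨l, path_to_real hl⟩⟩
  · intro l hl x
    exact ⟨fun hx => path_unique hl (real_to_path hdag hx), fun h => h ▸ path_to_real hl⟩
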